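/- (Fixed-point / self-consistency of the global minimum.) min over {Q̃W̃ : D^t(Q̃W̃, Q̃₀W̃₀) < ∞} of E₀^t(ρ,η,Q̃W̃) equals min over {QW : D^t(QW, Q̃₀W̃₀) < ∞} of F^t(ρ,η,QW,QW) = min over such QW of { D(W‖P|Q) − ρI(Q,W) + ηE_Q[f(X)] }. In words: the double minimization over (reference distribution, argument distribution) is achieved on the diagonal Q̃W̃ = QW. -/
import Mathlib


open scoped BigOperators
open Filter Topology

/-- A joint probability distribution on `X × Y`, given by a nonnegative
pmf `p` summing to one. -/
structure JointDist (X Y : Type) [Fintype X] [Fintype Y] where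
  p : X → Y → ℝ
  nonneg : ∀ x y, 0 ≤ p x y
  sum_one : ∑ x : X, ∑ y : Y, p x y = 1

namespace JointDist

variable {X Y : Type} [Fintype X] [Fintype Y]

/-- `X`-marginal `Q`. -/
noncomputable def Qm (μ : JointDist X Y) (x : X) : ℝ := ∑ y : Y, μ.p x y

/-- `Y`-marginal `T`. -/
noncomputable def Tm (μ : JointDist X Y) (y : Y) : ℝ := ∑ x : X, μ.p x y

/-- Conditional distribution `W(y|x)`. -/
noncomputable def Wc (μ : JointDist X Y) (x : X) (y : Y) : ℝ :=
  if μ.Qm x = 0 then 0 else μ.p x y / μ.Qm x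

/-- Conditional distribution `V(x|y)`. -/
noncomputable def Vc (μ : JointDist X Y) (y : Y) (x : X) : ℝ :=
  if μ.Tm y = 0 then 0 else μ.p x y / μ.Tm y

end JointDist

/-- Kullback–Leibler divergence `D(p‖q)` between finite nonnegative vectors,
valued in `EReal`, with the conventions `0 log 0 = 0` and `D = ⊤` if
absolute continuity fails. -/
noncomputable def relEnt {Z : Type} [Fintype Z] (p q : Z → ℝ) : EReal :=
  if ∀ z, q z = 0 → p z = 0 then
    (((∑ z : Z, if p z = 0 then 0 else p z * Real.log (p z / q z)) : ℝ) : EReal)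
  else ⊤

/-- Conditional KL divergence `D(w‖w'|q) = ∑_a q(a) D(w(·|a)‖w'(·|a))`,
valued in `EReal` with the usual conventions. -/
noncomputable def condRelEnt {A B : Type} [Fintype A] [Fintype B]
    (q : A → ℝ) (w w' : A → B → ℝ) : EReal :=
  if ∀ a b, q a ≠ 0 → w' a b = 0 → w a b = 0 then
    (((∑ a : A, ∑ b : B, if q a * w a b = 0 then 0
        else q a * w a b * Real.log (w a b / w' a b)) : ℝ) : EReal)
  else ⊤

variable {X Y : Type}

/-- The weighted divergence combination
`D^t(QW, Q'W') = t₁ D(Q‖Q') + t₂ D(W‖W'|Q) + t₃ D(T‖T') + t₄ D(V‖V'|T)`. -/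
noncomputable def Dt [Fintype X] [Fintype Y] (t : Fin 4 → ℝ)
    (μ ν : JointDist X Y) : EReal :=
  (t 0 : EReal) * relEnt μ.Qm ν.Qm + (t 1 : EReal) * condRelEnt μ.Qm μ.Wc ν.Wc +
  (t 2 : EReal) * relEnt μ.Tm ν.Tm + (t 3 : EReal) * condRelEnt μ.Tm μ.Vc ν.Vc

/-- `D(W‖P|Q)` for the channel `P`. -/
noncomputable def condDivP [Fintype X] [Fintype Y] (P : X → Y → ℝ)
    (μ : JointDist X Y) : EReal :=
  condRelEnt μ.Qm μ.Wc P

/-- Mutual information `I(Q,W)` of the joint law `QW`. -/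
noncomputable def mutInfo [Fintype X] [Fintype Y] (μ : JointDist X Y) : ℝ :=
  ∑ x : X, ∑ y : Y, if μ.p x y = 0 then 0
    else μ.p x y * Real.log (μ.p x y / (μ.Qm x * μ.Tm y))

/-- Expected cost `E_Q[f(X)]`. -/
noncomputable def expCost [Fintype X] [Fintype Y] (f : X → ℝ)
    (μ : JointDist X Y) : ℝ :=
  ∑ x : X, μ.Qm x * f x

/-- `F₁^t(QW, Q̃W̃) = D(W‖P|Q) + D^t(QW, Q̃W̃)`. -/
noncomputable def F1 [Fintype X] [Fintype Y] (P : X → Y → ℝ) (t : Fin 4 → ℝ)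
    (μ ν : JointDist X Y) : EReal :=
  condDivP P μ + Dt t μ ν

/-- `F₂(QW, R) = D(W‖P|Q) − I(Q,W) + R`. -/
noncomputable def F2 [Fintype X] [Fintype Y] (P : X → Y → ℝ) (R : ℝ)
    (μ : JointDist X Y) : EReal :=
  condDivP P μ - ((mutInfo μ : ℝ) : EReal) + ((R : ℝ) : EReal)

/-- `F^t(QW, Q̃W̃, R) = max{F₁^t(QW, Q̃W̃), F₂(QW, R)}`. -/
noncomputable def Fr [Fintype X] [Fintype Y] (P : X → Y → ℝ) (t : Fin 4 → ℝ)
    (R : ℝ) (μ ν : JointDist X Y) : EReal :=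
  max (F1 P t μ ν) (F2 P R μ)

/-- `E_c^t(Q̃W̃, R, α)`: the constrained minimum of `F^t(·, Q̃W̃, R)`. -/
noncomputable def Ec [Fintype X] [Fintype Y] (P : X → Y → ℝ) (t : Fin 4 → ℝ)
    (f : X → ℝ) (R α : ℝ) (ν : JointDist X Y) : EReal :=
  sInf ((fun μ => Fr P t R μ ν) '' {μ : JointDist X Y | expCost f μ ≤ α})

/-- `F^t(ρ, η, QW, Q̃W̃) = D(W‖P|Q) − ρ I(Q,W) + η E_Q[f] + (1−ρ) D^t(QW, Q̃W̃)`. -/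
noncomputable def Fslope [Fintype X] [Fintype Y] (P : X → Y → ℝ) (t : Fin 4 → ℝ)
    (f : X → ℝ) (ρ η : ℝ) (μ ν : JointDist X Y) : EReal :=
  condDivP P μ - ((ρ * mutInfo μ : ℝ) : EReal) + ((η * expCost f μ : ℝ) : EReal)
    + ((1 - ρ : ℝ) : EReal) * Dt t μ ν

/-- `E₀^t(ρ, η, Q̃W̃)`: the unconstrained minimum of `F^t(ρ, η, ·, Q̃W̃)`. -/
noncomputable def E0 [Fintype X] [Fintype Y] (P : X → Y → ℝ) (t : Fin 4 → ℝ)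
    (f : X → ℝ) (ρ η : ℝ) (ν : JointDist X Y) : EReal :=
  sInf (Set.range (fun μ : JointDist X Y => Fslope P t f ρ η μ ν))


section AuxLemmas

lemma relEnt_self {Z : Type} [Fintype Z] (p : Z → ℝ) : relEnt p p = 0 := by
  unfold relEnt
  rw [if_pos (fun z h => h)]
  have h : (∑ z : Z, if p z = 0 then 0 else p z * Real.log (p z / p z)) = 0 := by
    apply Finset.sum_eq_zero
    intro z _
    split_ifs with h
    · rfl
    · rw [div_self h, Real.log_one, mul_zero]
  rw [h]; exact EReal.coe_zero

lemma condRelEnt_self {A B : Type} [Fintype A] [Fintype B] (q : A → ℝ) (w : A → B → ℝ) :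
    condRelEnt q w w = 0 := by
  unfold condRelEnt
  rw [if_pos (fun a b _ h => h)]
  have h : (∑ a : A, ∑ b : B, if q a * w a b = 0 then 0
      else q a * w a b * Real.log (w a b / w a b)) = 0 := by
    apply Finset.sum_eq_zero; intro a _
    apply Finset.sum_eq_zero; intro b _
    split_ifs with h
    · rfl
    · have hw : w a b ≠ 0 := fun e => h (by rw [e, mul_zero])
      rw [div_self hw, Real.log_one, mul_zero]
  rw [h]; exact EReal.coe_zero

lemma gibbs_aux {Z : Type} [Fintype Z] (p q : Z → ℝ) (hp : ∀ b, 0 ≤ p b) (hq : ∀ b, 0 ≤ q b)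
    (hac : ∀ b, q b = 0 → p b = 0) (hpq : ∑ b, q b ≤ ∑ b, p b) :
    0 ≤ ∑ b, (if p b = 0 then 0 else p b * Real.log (p b / q b)) := by
  have key : ∀ b : Z, p b - q b ≤ (if p b = 0 then 0 else p b * Real.log (p b / q b)) := by
    intro b
    split_ifs with h
    · rw [h]; linarith [hq b]
    · have hp' : 0 < p b := lt_of_le_of_ne (hp b) (Ne.symm h)
      have hq' : 0 < q b := lt_of_le_of_ne (hq b) fun e => h (hac b e.symm)
      have hlog : Real.log (q b / p b) ≤ q b / p b - 1 :=
        Real.log_le_sub_one_of_pos (div_pos hq' hp')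
      have hlog2 : Real.log (p b / q b) = - Real.log (q b / p b) := by
        rw [← Real.log_inv, inv_div]
      have h1 : p b * (q b / p b) = q b := by field_simp
      have h2 : p b * Real.log (q b / p b) ≤ p b * (q b / p b - 1) :=
        mul_le_mul_of_nonneg_left hlog hp'.le
      have h3 : p b * (q b / p b - 1) = p b * (q b / p b) - p b := by ring
      have h4 : p b * Real.log (p b / q b) = -(p b * Real.log (q b / p b)) := by
        rw [hlog2]; ring
      rw [h4]; rw [h3, h1] at h2; linarith
  calc (0:ℝ) ≤ ∑ b, (p b - q b) := by
        rw [Finset.sum_sub_distrib]; linarith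
    _ ≤ _ := Finset.sum_le_sum fun b _ => key b

lemma relEnt_nonneg {Z : Type} [Fintype Z] (p q : Z → ℝ) (hp : ∀ b, 0 ≤ p b)
    (hq : ∀ b, 0 ≤ q b) (hpq : ∑ b, q b ≤ ∑ b, p b) : 0 ≤ relEnt p q := by
  unfold relEnt; split_ifs with h
  · exact_mod_cast gibbs_aux p q hp hq h hpq
  · exact le_top

lemma condRelEnt_nonneg {A B : Type} [Fintype A] [Fintype B]
    (q : A → ℝ) (w w' : A → B → ℝ) (hq : ∀ a, 0 ≤ q a)
    (hw : ∀ a b, 0 ≤ w a b) (hw' : ∀ a b, 0 ≤ w' a b)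
    (hsum : ∀ a, q a ≠ 0 → ∑ b, w' a b ≤ ∑ b, w a b) :
    0 ≤ condRelEnt q w w' := by
  unfold condRelEnt; split_ifs with h
  · rw [EReal.coe_nonneg]
    apply Finset.sum_nonneg; intro a _
    by_cases ha : q a = 0
    · apply Finset.sum_nonneg; intro b _
      simp [ha]
    · have key : ∀ b, (if q a * w a b = 0 then (0:ℝ)
          else q a * w a b * Real.log (w a b / w' a b))
          = q a * (if w a b = 0 then 0 else w a b * Real.log (w a b / w' a b)) := by
        intro b
        by_cases hb : w a b = 0
        · simp [hb]
        · rw [if_neg (mul_ne_zero ha hb), if_neg hb, mul_assoc]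
      rw [Finset.sum_congr rfl (fun b _ => key b), ← Finset.mul_sum]
      exact mul_nonneg (hq a)
        (gibbs_aux (w a) (w' a) (hw a) (hw' a) (fun b => h a b ha) (hsum a ha))
  · exact le_top

lemma condRelEnt_ne_bot {A B : Type} [Fintype A] [Fintype B]
    (q : A → ℝ) (w w' : A → B → ℝ) : condRelEnt q w w' ≠ ⊥ := by
  unfold condRelEnt; split_ifs
  · exact EReal.coe_ne_bot _
  · exact top_ne_bot

namespace JointDist

variable {X Y : Type} [Fintype X] [Fintype Y]

lemma Qm_nonneg (μ : JointDist X Y) (x : X) : 0 ≤ μ.Qm x :=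
  Finset.sum_nonneg fun y _ => μ.nonneg x y

lemma Tm_nonneg (μ : JointDist X Y) (y : Y) : 0 ≤ μ.Tm y :=
  Finset.sum_nonneg fun x _ => μ.nonneg x y

lemma Qm_sum (μ : JointDist X Y) : ∑ x, μ.Qm x = 1 := μ.sum_one

lemma Tm_sum (μ : JointDist X Y) : ∑ y, μ.Tm y = 1 := by
  rw [show (∑ y, μ.Tm y) = ∑ y : Y, ∑ x : X, μ.p x y from rfl, Finset.sum_comm]
  exact μ.sum_one

lemma Wc_nonneg (μ : JointDist X Y) (x : X) (y : Y) : 0 ≤ μ.Wc x y := by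
  unfold Wc; split_ifs
  · exact le_refl 0
  · exact div_nonneg (μ.nonneg x y) (μ.Qm_nonneg x)

lemma Vc_nonneg (μ : JointDist X Y) (y : Y) (x : X) : 0 ≤ μ.Vc y x := by
  unfold Vc; split_ifs
  · exact le_refl 0
  · exact div_nonneg (μ.nonneg x y) (μ.Tm_nonneg y)

lemma Wc_of_Qm_eq_zero (μ : JointDist X Y) {x : X} (h : μ.Qm x = 0) (y : Y) :
    μ.Wc x y = 0 := if_pos h

lemma Vc_of_Tm_eq_zero (μ : JointDist X Y) {y : Y} (h : μ.Tm y = 0) (x : X) :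
    μ.Vc y x = 0 := if_pos h

lemma Wc_sum (μ : JointDist X Y) {x : X} (h : μ.Qm x ≠ 0) : ∑ y, μ.Wc x y = 1 := by
  unfold Wc
  simp only [if_neg h]
  rw [← Finset.sum_div]
  exact div_self h

lemma Vc_sum (μ : JointDist X Y) {y : Y} (h : μ.Tm y ≠ 0) : ∑ x, μ.Vc y x = 1 := by
  unfold Vc
  simp only [if_neg h]
  rw [← Finset.sum_div]
  exact div_self h

lemma Wc_sum_le (μ : JointDist X Y) (x : X) : ∑ y, μ.Wc x y ≤ 1 := by
  by_cases h : μ.Qm x = 0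
  · simp [μ.Wc_of_Qm_eq_zero h]
  · exact le_of_eq (μ.Wc_sum h)

lemma Vc_sum_le (μ : JointDist X Y) (y : Y) : ∑ x, μ.Vc y x ≤ 1 := by
  by_cases h : μ.Tm y = 0
  · simp [μ.Vc_of_Tm_eq_zero h]
  · exact le_of_eq (μ.Vc_sum h)

end JointDist

lemma ereal_mul_nonneg {a b : EReal} (ha : 0 ≤ a) (hb : 0 ≤ b) : 0 ≤ a * b := by
  rcases eq_or_lt_of_le ha with h | h
  · rw [← h, zero_mul]
  rcases eq_or_lt_of_le hb with h' | h'
  · rw [← h', mul_zero]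
  · exact (EReal.mul_pos h h').le

section Main

variable {X Y : Type} [Fintype X] [Fintype Y]

lemma relEnt_Qm_nonneg (μ ν : JointDist X Y) : 0 ≤ relEnt μ.Qm ν.Qm :=
  relEnt_nonneg _ _ μ.Qm_nonneg ν.Qm_nonneg (by rw [μ.Qm_sum, ν.Qm_sum])

lemma relEnt_Tm_nonneg (μ ν : JointDist X Y) : 0 ≤ relEnt μ.Tm ν.Tm :=
  relEnt_nonneg _ _ μ.Tm_nonneg ν.Tm_nonneg (by rw [μ.Tm_sum, ν.Tm_sum])

lemma condRelEnt_W_nonneg (μ ν : JointDist X Y) : 0 ≤ condRelEnt μ.Qm μ.Wc ν.Wc := by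
  apply condRelEnt_nonneg _ _ _ μ.Qm_nonneg μ.Wc_nonneg ν.Wc_nonneg
  intro a ha
  rw [μ.Wc_sum ha]
  exact ν.Wc_sum_le a

lemma condRelEnt_V_nonneg (μ ν : JointDist X Y) : 0 ≤ condRelEnt μ.Tm μ.Vc ν.Vc := by
  apply condRelEnt_nonneg _ _ _ μ.Tm_nonneg μ.Vc_nonneg ν.Vc_nonneg
  intro a ha
  rw [μ.Vc_sum ha]
  exact ν.Vc_sum_le a

lemma Dt_self (t : Fin 4 → ℝ) (μ : JointDist X Y) : Dt t μ μ = 0 := by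
  unfold Dt
  rw [relEnt_self, condRelEnt_self, relEnt_self, condRelEnt_self]
  simp

lemma Dt_nonneg (t : Fin 4 → ℝ) (ht : ∀ i, 0 ≤ t i) (μ ν : JointDist X Y) :
    0 ≤ Dt t μ ν := by
  unfold Dt
  have c : ∀ i, (0:EReal) ≤ (t i : EReal) := fun i => EReal.coe_nonneg.mpr (ht i)
  exact add_nonneg (add_nonneg (add_nonneg
    (ereal_mul_nonneg (c 0) (relEnt_Qm_nonneg μ ν))
    (ereal_mul_nonneg (c 1) (condRelEnt_W_nonneg μ ν)))
    (ereal_mul_nonneg (c 2) (relEnt_Tm_nonneg μ ν)))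
    (ereal_mul_nonneg (c 3) (condRelEnt_V_nonneg μ ν))

lemma ereal_add_lt_top_iff {a b : EReal} (ha : 0 ≤ a) (hb : 0 ≤ b) :
    a + b < ⊤ ↔ a < ⊤ ∧ b < ⊤ := by
  constructor
  · intro h
    constructor
    · by_contra hc
      rw [top_le_iff.mp (not_lt.mp hc),
        EReal.top_add_of_ne_bot (EReal.bot_lt_zero.trans_le hb).ne'] at h
      exact lt_irrefl _ h
    · by_contra hc
      rw [top_le_iff.mp (not_lt.mp hc),
        EReal.add_top_of_ne_bot (EReal.bot_lt_zero.trans_le ha).ne'] at h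
      exact lt_irrefl _ h
  · rintro ⟨h1, h2⟩
    exact EReal.add_lt_top h1.ne h2.ne

lemma relEnt_cond_of_mul_lt_top {c : ℝ} (hc0 : 0 ≤ c) (hc : c ≠ 0)
    {Z : Type} [Fintype Z] {p q : Z → ℝ}
    (h : (c : EReal) * relEnt p q < ⊤) : ∀ z, q z = 0 → p z = 0 := by
  by_contra hcond
  unfold relEnt at h
  rw [if_neg hcond, EReal.coe_mul_top_of_pos (lt_of_le_of_ne hc0 (Ne.symm hc))] at h
  exact lt_irrefl _ h

lemma condRelEnt_cond_of_mul_lt_top {c : ℝ} (hc0 : 0 ≤ c) (hc : c ≠ 0)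
    {A B : Type} [Fintype A] [Fintype B] {q : A → ℝ} {w w' : A → B → ℝ}
    (h : (c : EReal) * condRelEnt q w w' < ⊤) :
    ∀ a b, q a ≠ 0 → w' a b = 0 → w a b = 0 := by
  by_contra hcond
  unfold condRelEnt at h
  rw [if_neg hcond, EReal.coe_mul_top_of_pos (lt_of_le_of_ne hc0 (Ne.symm hc))] at h
  exact lt_irrefl _ h

lemma mul_relEnt_lt_top {c : ℝ} {Z : Type} [Fintype Z] {p q : Z → ℝ}
    (h : c ≠ 0 → ∀ z, q z = 0 → p z = 0) : (c : EReal) * relEnt p q < ⊤ := by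
  by_cases hc : c = 0
  · rw [hc, EReal.coe_zero, zero_mul]
    exact EReal.zero_lt_top
  · unfold relEnt
    rw [if_pos (h hc), ← EReal.coe_mul]
    exact EReal.coe_lt_top _

lemma mul_condRelEnt_lt_top {c : ℝ} {A B : Type} [Fintype A] [Fintype B]
    {q : A → ℝ} {w w' : A → B → ℝ}
    (h : c ≠ 0 → ∀ a b, q a ≠ 0 → w' a b = 0 → w a b = 0) :
    (c : EReal) * condRelEnt q w w' < ⊤ := by
  by_cases hc : c = 0
  · rw [hc, EReal.coe_zero, zero_mul]
    exact EReal.zero_lt_top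
  · unfold condRelEnt
    rw [if_pos (h hc), ← EReal.coe_mul]
    exact EReal.coe_lt_top _

lemma Dt_cond {t : Fin 4 → ℝ} (ht : ∀ i, 0 ≤ t i) {μ ν : JointDist X Y} :
    Dt t μ ν < ⊤ ↔
    ((t 0 ≠ 0 → ∀ z, ν.Qm z = 0 → μ.Qm z = 0) ∧
     (t 1 ≠ 0 → ∀ a b, μ.Qm a ≠ 0 → ν.Wc a b = 0 → μ.Wc a b = 0) ∧
     (t 2 ≠ 0 → ∀ z, ν.Tm z = 0 → μ.Tm z = 0) ∧
     (t 3 ≠ 0 → ∀ a b, μ.Tm a ≠ 0 → ν.Vc a b = 0 → μ.Vc a b = 0)) := by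
  have c : ∀ i, (0:EReal) ≤ (t i : EReal) := fun i => EReal.coe_nonneg.mpr (ht i)
  have n0 := ereal_mul_nonneg (c 0) (relEnt_Qm_nonneg μ ν)
  have n1 := ereal_mul_nonneg (c 1) (condRelEnt_W_nonneg μ ν)
  have n2 := ereal_mul_nonneg (c 2) (relEnt_Tm_nonneg μ ν)
  have n3 := ereal_mul_nonneg (c 3) (condRelEnt_V_nonneg μ ν)
  unfold Dt
  rw [ereal_add_lt_top_iff (add_nonneg (add_nonneg n0 n1) n2) n3,
      ereal_add_lt_top_iff (add_nonneg n0 n1) n2,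
      ereal_add_lt_top_iff n0 n1]
  constructor
  · rintro ⟨⟨⟨h0, h1⟩, h2⟩, h3⟩
    exact ⟨fun hne => relEnt_cond_of_mul_lt_top (ht 0) hne h0,
      fun hne => condRelEnt_cond_of_mul_lt_top (ht 1) hne h1,
      fun hne => relEnt_cond_of_mul_lt_top (ht 2) hne h2,
      fun hne => condRelEnt_cond_of_mul_lt_top (ht 3) hne h3⟩
  · rintro ⟨h0, h1, h2, h3⟩
    exact ⟨⟨⟨mul_relEnt_lt_top h0, mul_condRelEnt_lt_top h1⟩,
      mul_relEnt_lt_top h2⟩, mul_condRelEnt_lt_top h3⟩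

lemma Dt_trans {t : Fin 4 → ℝ} (ht : ∀ i, 0 ≤ t i) {μ ν ξ : JointDist X Y}
    (h1 : Dt t μ ν < ⊤) (h2 : Dt t ν ξ < ⊤) : Dt t μ ξ < ⊤ := by
  rw [Dt_cond ht] at h1 h2 ⊢
  obtain ⟨a0, a1, a2, a3⟩ := h1
  obtain ⟨b0, b1, b2, b3⟩ := h2
  refine ⟨fun hne z hz => a0 hne z (b0 hne z hz), fun hne a b ha h0 => ?_,
    fun hne z hz => a2 hne z (b2 hne z hz), fun hne a b ha h0 => ?_⟩
  · have hνa : ν.Qm a ≠ 0 := by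
      intro hz
      have hw : ∀ b, μ.Wc a b = 0 := fun b => a1 hne a b ha (ν.Wc_of_Qm_eq_zero hz b)
      have hs := μ.Wc_sum ha
      rw [Finset.sum_eq_zero (fun b _ => hw b)] at hs
      exact one_ne_zero hs.symm
    exact a1 hne a b ha (b1 hne a b hνa h0)
  · have hνa : ν.Tm a ≠ 0 := by
      intro hz
      have hw : ∀ b, μ.Vc a b = 0 := fun b => a3 hne a b ha (ν.Vc_of_Tm_eq_zero hz b)
      have hs := μ.Vc_sum ha
      rw [Finset.sum_eq_zero (fun b _ => hw b)] at hs
      exact one_ne_zero hs.symm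
    exact a3 hne a b ha (b3 hne a b hνa h0)

lemma base_ne_bot (P : X → Y → ℝ) (ρ η : ℝ) (f : X → ℝ) (μ : JointDist X Y) :
    condDivP P μ - ((ρ * mutInfo μ : ℝ) : EReal) + ((η * expCost f μ : ℝ) : EReal) ≠ ⊥ := by
  rw [sub_eq_add_neg, ← EReal.coe_neg]
  intro h
  rcases EReal.add_eq_bot_iff.mp h with h | h
  · rcases EReal.add_eq_bot_iff.mp h with h | h
    · exact condRelEnt_ne_bot _ _ _ h
    · exact EReal.coe_ne_bot _ h
  · exact EReal.coe_ne_bot _ h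

lemma Fslope_diag (P : X → Y → ℝ) (t : Fin 4 → ℝ) (f : X → ℝ) (ρ η : ℝ)
    (μ : JointDist X Y) :
    Fslope P t f ρ η μ μ = condDivP P μ - ((ρ * mutInfo μ : ℝ) : EReal)
      + ((η * expCost f μ : ℝ) : EReal) := by
  unfold Fslope
  rw [Dt_self, mul_zero, add_zero]

lemma Fslope_diag_le (P : X → Y → ℝ) (t : Fin 4 → ℝ) (ht : ∀ i, 0 ≤ t i)
    (f : X → ℝ) (ρ η : ℝ) (hρ1 : ρ < 1) (μ ν : JointDist X Y) :
    Fslope P t f ρ η μ μ ≤ Fslope P t f ρ η μ ν := by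
  rw [Fslope_diag]
  unfold Fslope
  exact le_add_of_nonneg_right (ereal_mul_nonneg
    (EReal.coe_nonneg.mpr (by linarith)) (Dt_nonneg t ht μ ν))

lemma Dt_lt_top_of_Fslope (P : X → Y → ℝ) (t : Fin 4 → ℝ) (ht : ∀ i, 0 ≤ t i)
    (f : X → ℝ) (ρ η : ℝ) (hρ1 : ρ < 1) {μ ν : JointDist X Y}
    (h : Fslope P t f ρ η μ ν < ⊤) : Dt t μ ν < ⊤ := by
  by_contra hc
  have hDt : Dt t μ ν = ⊤ := top_le_iff.mp (not_lt.mp hc)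
  unfold Fslope at h
  rw [hDt, EReal.coe_mul_top_of_pos (by linarith : (0:ℝ) < 1 - ρ),
    EReal.add_top_of_ne_bot (base_ne_bot P ρ η f μ)] at h
  exact lt_irrefl _ h

end Main

end AuxLemmas

/-- Fixed-point property of the global minimum: the double minimization is
achieved on the diagonal `Q̃W̃ = QW`, where
`F^t(ρ,η,QW,QW) = D(W‖P|Q) − ρI(Q,W) + ηE_Q[f]`. -/
theorem stmt17 {X Y : Type} [Fintype X] [Fintype Y]
    (P : X → Y → ℝ) (hP : ∀ x y, 0 ≤ P x y) (hPsum : ∀ x, ∑ y : Y, P x y = 1)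
    (t : Fin 4 → ℝ) (ht : ∀ i, 0 ≤ t i)
    (f : X → ℝ) (ρ η : ℝ) (hρ0 : 0 ≤ ρ) (hρ1 : ρ < 1) (hη : 0 ≤ η)
    (ν₀ : JointDist X Y) :
    sInf ((fun ν => E0 P t f ρ η ν) '' {ν : JointDist X Y | Dt t ν ν₀ < ⊤})
      = sInf ((fun μ => Fslope P t f ρ η μ μ) ''
          {μ : JointDist X Y | Dt t μ ν₀ < ⊤}) ∧
    sInf ((fun μ => Fslope P t f ρ η μ μ) ''
          {μ : JointDist X Y | Dt t μ ν₀ < ⊤})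
      = sInf ((fun μ => condDivP P μ - ((ρ * mutInfo μ : ℝ) : EReal)
            + ((η * expCost f μ : ℝ) : EReal)) ''
          {μ : JointDist X Y | Dt t μ ν₀ < ⊤}) := by
  constructor
  · apply le_antisymm
    · apply le_sInf
      rintro x ⟨μ, hμ, rfl⟩
      refine le_trans (sInf_le ⟨μ, hμ, rfl⟩) ?_
      exact sInf_le ⟨μ, rfl⟩
    · apply le_sInf
      rintro x ⟨ν, hν, rfl⟩
      apply le_sInf
      rintro x ⟨μ, rfl⟩
      by_cases hfin : Fslope P t f ρ η μ ν < ⊤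
      · have hDt : Dt t μ ν < ⊤ := Dt_lt_top_of_Fslope P t ht f ρ η hρ1 hfin
        have hS : Dt t μ ν₀ < ⊤ := Dt_trans ht hDt hν
        exact le_trans (sInf_le ⟨μ, hS, rfl⟩) (Fslope_diag_le P t ht f ρ η hρ1 μ ν)
      · exact le_trans le_top (not_lt.mp hfin)
  · have h : (fun μ : JointDist X Y => Fslope P t f ρ η μ μ)
        = fun μ => condDivP P μ - ((ρ * mutInfo μ : ℝ) : EReal)
            + ((η * expCost f μ : ℝ) : EReal) :=
      funext fun μ => Fslope_diag P t f ρ η μ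
    rw [h]
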